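/- For bond percolation on ℤ^d with d ≥ 2, the critical probability satisfies p_c(ℤ^d) < 1; that is, there exists p < 1 with θ(p) > 0. -/

import Mathlib

open MeasureTheory
open scoped ENNReal

namespace Percolation

variable {V : Type} (G : SimpleGraph V)

/-- A bond-percolation configuration: each edge of `G` is open (`true`) or closed (`false`). -/
abbrev Config := G.edgeSet → Bool

/-- A walk all of whose edges are open. -/
def IsOpenWalk {u v : V} (ω : Config G) (w : G.Walk u v) : Prop :=
  ∀ e (he : e ∈ w.edges), ω ⟨e, w.edges_subset_edgeSet he⟩ = true

/-- The open cluster of a vertex `v`: all vertices joined to `v` by an open path. -/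
def cluster (ω : Config G) (v : V) : Set V :=
  {u | ∃ w : G.Walk v u, IsOpenWalk G ω w}

/-- `μ` is the product Bernoulli(`p`) measure on configurations: a probability measure whose
cylinder events have the right probability (this determines `μ` uniquely). -/
def IsBernoulli (p : ℝ) (μ : Measure (Config G)) : Prop :=
  IsProbabilityMeasure μ ∧
    ∀ (s : Finset G.edgeSet) (f : G.edgeSet → Bool),
      μ {ω | ∀ e ∈ s, ω e = f e} =
        ∏ e ∈ s, (if f e then ENNReal.ofReal p else ENNReal.ofReal (1 - p))

/-- The nearest-neighbour (hyper)cubic lattice `ℤ^d`. -/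
def zdGraph (d : ℕ) : SimpleGraph (Fin d → ℤ) where
  Adj x y := (∑ i, |x i - y i|) = 1
  symm := by
    constructor
    intro x y h
    have h' : ∀ i ∈ Finset.univ, |y i - x i| = |x i - y i| := fun i _ => abs_sub_comm _ _
    rw [Finset.sum_congr rfl h']
    exact h
  loopless := by constructor; intro x h; simp at h

/-- The percolation probability `θ(p)` for the cluster of the vertex `v`,
given a family `P` of percolation measures. -/
noncomputable def theta (P : ℝ → Measure (Config G)) (v : V) (p : ℝ) : ℝ≥0∞ :=
  P p {ω | (cluster G ω v).Infinite}

/-- The critical probability `p_c = sup {p : θ(p) = 0}`. -/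
noncomputable def pc (P : ℝ → Measure (Config G)) (v : V) : ℝ :=
  sSup {p : ℝ | p ∈ Set.Icc (0:ℝ) 1 ∧ theta G P v p = 0}

end Percolation

open Percolation

open scoped Classical

namespace PcAux

/-- planar adjacency on ℤ² -/
def adj2 (a b : ℤ×ℤ) : Prop :=
  (a.1 = b.1 ∧ (a.2 = b.2+1 ∨ b.2 = a.2+1)) ∨ (a.2 = b.2 ∧ (a.1 = b.1+1 ∨ b.1 = a.1+1))

lemma adj2_symm {a b : ℤ×ℤ} (h : adj2 a b) : adj2 b a := by
  unfold adj2 at *; omega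

lemma adj2_cases {a b : ℤ×ℤ} (h : adj2 a b) :
    b = (a.1+1, a.2) ∨ b = (a.1-1, a.2) ∨ b = (a.1, a.2+1) ∨ b = (a.1, a.2-1) := by
  unfold adj2 at h
  rcases a with ⟨ax, ay⟩; rcases b with ⟨bx, by'⟩
  simp only [Prod.mk.injEq] at *
  omega

/-- code of the horizontal edge from (x,y) to (x+1,y) -/
def hc (x y : ℤ) : ℤ×ℤ := (2*x+1, 2*y)
/-- code of the vertical edge from (x,y) to (x,y+1) -/
def vc (x y : ℤ) : ℤ×ℤ := (2*x, 2*y+1)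

lemma code_h (a : ℤ×ℤ) : a + (a.1+1, a.2) = hc a.1 a.2 := by
  simp [hc, Prod.ext_iff]; constructor <;> ring
lemma code_v (a : ℤ×ℤ) : a + (a.1, a.2+1) = vc a.1 a.2 := by
  simp [vc, Prod.ext_iff]; constructor <;> ring

/-- the unordered pair of endpoints is determined by the code -/
lemma code_inj {a b a' b' : ℤ×ℤ} (h : adj2 a b) (h' : adj2 a' b')
    (he : a + b = a' + b') : (a = a' ∧ b = b') ∨ (a = b' ∧ b = a') := by
  unfold adj2 at h h'
  rcases a with ⟨ax, ay⟩; rcases b with ⟨bx, by'⟩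
  rcases a' with ⟨cx, cy⟩; rcases b' with ⟨dx, dy⟩
  simp only [Prod.ext_iff, Prod.fst_add, Prod.snd_add, Prod.mk.injEq] at *
  omega

noncomputable def χ (X : Set (ℤ×ℤ)) (s : ℤ×ℤ) : Bool := decide (s ∈ X)

lemma χ_iff {X : Set (ℤ×ℤ)} {s : ℤ×ℤ} : χ X s = true ↔ s ∈ X := by
  simp [χ]

lemma xor_cancel_left' (a b : Bool) : xor a (xor a b) = b := by
  cases a <;> cases b <;> rfl

lemma xor_rot {a b c : Bool} (h : xor a b = c) : b = xor a c := by
  subst h; cases a <;> cases b <;> rfl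

lemma ne_iff_xor {a b : Bool} : a ≠ b ↔ xor a b = true := by
  cases a <;> cases b <;> simp

section Potential

variable (X : Set (ℤ×ℤ))

noncomputable def vpar (x y : ℤ) : Bool :=
  decide (Odd (((Finset.Ico (min 0 y) (max 0 y))).filter (fun t => vc x t ∈ X)).card)

noncomputable def hpar (x : ℤ) : Bool :=
  decide (Odd (((Finset.Ico (min 0 x) (max 0 x))).filter (fun j => hc j 0 ∈ X)).card)

noncomputable def pot (a : ℤ×ℤ) : Bool := xor (hpar X a.1) (vpar X a.1 a.2)

lemma ico_succ_insert (y : ℤ) (hy : 0 ≤ y) :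
    Finset.Ico (min 0 (y+1)) (max 0 (y+1)) = insert y (Finset.Ico (min 0 y) (max 0 y)) := by
  ext z; simp only [Finset.mem_Ico, Finset.mem_insert]; omega

lemma ico_neg_insert (y : ℤ) (hy : y < 0) :
    Finset.Ico (min 0 y) (max 0 y) = insert y (Finset.Ico (min 0 (y+1)) (max 0 (y+1))) := by
  ext z; simp only [Finset.mem_Ico, Finset.mem_insert]; omega

lemma parity_insert (P : ℤ → Prop) (s : Finset ℤ) (y : ℤ) (hy : y ∉ s) :
    decide (Odd ((insert y s).filter (fun t => P t)).card)
      = xor (decide (Odd ((s).filter (fun t => P t)).card)) (decide (P y)) := by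
  by_cases h : P y
  · rw [Finset.filter_insert, if_pos h, Finset.card_insert_of_notMem (by simp [hy])]
    by_cases h2 : Odd ((s).filter (fun t => P t)).card <;>
      simp [h, h2, Nat.odd_add_one, Nat.not_odd_iff_even]
  · rw [Finset.filter_insert, if_neg h]
    simp [h]

lemma vpar_step (x y : ℤ) : vpar X x (y+1) = xor (vpar X x y) (χ X (vc x y)) := by
  by_cases hy : 0 ≤ y
  · unfold vpar
    rw [ico_succ_insert y hy,
      parity_insert (fun t => vc x t ∈ X) _ y (by simp only [Finset.mem_Ico]; omega)]
    rfl
  · unfold vpar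
    simp only [χ]
    rw [ico_neg_insert y (by omega),
      parity_insert (fun t => vc x t ∈ X) _ y (by simp only [Finset.mem_Ico]; omega)]
    rw [Bool.xor_assoc, Bool.xor_self, Bool.xor_false]

lemma hpar_step (x : ℤ) : hpar X (x+1) = xor (hpar X x) (χ X (hc x 0)) := by
  by_cases hy : 0 ≤ x
  · unfold hpar
    rw [ico_succ_insert x hy,
      parity_insert (fun j => hc j 0 ∈ X) _ x (by simp only [Finset.mem_Ico]; omega)]
    rfl
  · unfold hpar
    simp only [χ]
    rw [ico_neg_insert x (by omega),
      parity_insert (fun j => hc j 0 ∈ X) _ x (by simp only [Finset.mem_Ico]; omega)]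
    rw [Bool.xor_assoc, Bool.xor_self, Bool.xor_false]

lemma pot_v (x y : ℤ) : χ X (vc x y) = xor (pot X (x,y)) (pot X (x,y+1)) := by
  unfold pot
  rw [vpar_step]
  generalize hpar X x = a
  generalize vpar X x y = b
  generalize χ X (vc x y) = c
  cases a <;> cases b <;> cases c <;> rfl

variable {X}
variable (hsq : ∀ x y : ℤ, xor (χ X (hc x y)) (χ X (hc x (y+1)))
    = xor (χ X (vc x y)) (χ X (vc (x+1) y)))

include hsq in
lemma pot_h (x y : ℤ) : χ X (hc x y) = xor (pot X (x,y)) (pot X (x+1,y)) := by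
  have vzero : ∀ x', vpar X x' 0 = false := by
    intro x'; simp [vpar]
  have base : χ X (hc x 0) = xor (pot X (x,0)) (pot X (x+1,0)) := by
    unfold pot
    rw [vzero, vzero, Bool.xor_false, Bool.xor_false, hpar_step]
    generalize hpar X x = a
    generalize χ X (hc x 0) = c
    cases a <;> cases c <;> rfl
  have step : ∀ y : ℤ, χ X (hc x y) = xor (pot X (x,y)) (pot X (x+1,y)) →
      χ X (hc x (y+1)) = xor (pot X (x,y+1)) (pot X (x+1,y+1)) := by
    intro y ih
    have hs := hsq x y
    have v1 := pot_v X x y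
    have v2 := pot_v X (x+1) y
    have h1 : χ X (hc x (y+1)) = xor (χ X (hc x y)) (xor (χ X (vc x y)) (χ X (vc (x+1) y))) := by
      rw [← hs, ← Bool.xor_assoc, Bool.xor_self, Bool.false_xor]
    rw [h1, ih, v1, v2]
    generalize pot X (x,y) = a
    generalize pot X (x+1,y) = b
    generalize pot X (x,y+1) = c
    generalize pot X (x+1,y+1) = d
    cases a <;> cases b <;> cases c <;> cases d <;> rfl
  have stepdown : ∀ y : ℤ, χ X (hc x (y+1)) = xor (pot X (x,y+1)) (pot X (x+1,y+1)) →
      χ X (hc x y) = xor (pot X (x,y)) (pot X (x+1,y)) := by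
    intro y ih
    have hs := hsq x y
    have v1 := pot_v X x y
    have v2 := pot_v X (x+1) y
    have h1 : χ X (hc x y) = xor (χ X (hc x (y+1))) (xor (χ X (vc x y)) (χ X (vc (x+1) y))) := by
      rw [← hs]
      generalize χ X (hc x y) = a
      generalize χ X (hc x (y+1)) = b
      cases a <;> cases b <;> rfl
    rw [h1, ih, v1, v2]
    generalize pot X (x,y) = a
    generalize pot X (x+1,y) = b
    generalize pot X (x,y+1) = c
    generalize pot X (x+1,y+1) = d
    cases a <;> cases b <;> cases c <;> cases d <;> rfl
  induction y using Int.induction_on with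
  | zero => exact base
  | succ y ih => exact step y ih
  | pred y ih =>
    have := stepdown (-(y:ℤ)-1)
    rw [show (-(y:ℤ)-1)+1 = -(y:ℤ) by ring] at this
    exact this ih

include hsq in
/-- the potential representation: an edge code is in X iff the potential differs. -/
lemma pot_spec {a b : ℤ×ℤ} (h : adj2 a b) : a + b ∈ X ↔ pot X a ≠ pot X b := by
  have key : ∀ u : ℤ×ℤ, ∀ v : ℤ×ℤ,
      (v = (u.1+1, u.2) ∨ v = (u.1, u.2+1)) → (u + v ∈ X ↔ pot X u ≠ pot X v) := by
    rintro u v (rfl | rfl)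
    · rw [code_h, ← χ_iff, pot_h hsq u.1 u.2, ne_iff_xor]
    · rw [code_v, ← χ_iff, pot_v X u.1 u.2, ne_iff_xor]
  rcases adj2_cases h with hb | hb | hb | hb
  · subst hb; exact key a _ (Or.inl rfl)
  · have h2 : a = (b.1 + 1, b.2) := by
      rcases a with ⟨a1,a2⟩; rcases b with ⟨b1,b2⟩
      simp only [Prod.mk.injEq] at hb ⊢; omega
    have := key b a (Or.inl h2)
    rw [add_comm] at this
    exact this.trans ne_comm
  · subst hb; exact key a _ (Or.inr rfl)
  · have h2 : a = (b.1, b.2 + 1) := by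
      rcases a with ⟨a1,a2⟩; rcases b with ⟨b1,b2⟩
      simp only [Prod.mk.injEq] at hb ⊢; omega
    have := key b a (Or.inr h2)
    rw [add_comm] at this
    exact this.trans ne_comm

end Potential




open Relation

/-- the 12 admissible steps between codes of edges sharing a unit square -/
def stepv : Fin 12 → ℤ×ℤ :=
  ![(2,0),(-2,0),(0,2),(0,-2),(1,1),(1,-1),(-1,1),(-1,-1),(2,2),(2,-2),(-2,2),(-2,-2)]

def Jadj (s t : ℤ×ℤ) : Prop := ∃ i, t - s = stepv i

lemma Jadj_symm {s t : ℤ×ℤ} (h : Jadj s t) : Jadj t s := by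
  obtain ⟨i, hi⟩ := h
  have hst : s - t = -stepv i := by rw [← hi]; ring
  fin_cases i <;>
    [exact ⟨1, by rw [hst]; decide⟩; exact ⟨0, by rw [hst]; decide⟩;
     exact ⟨3, by rw [hst]; decide⟩; exact ⟨2, by rw [hst]; decide⟩;
     exact ⟨7, by rw [hst]; decide⟩; exact ⟨6, by rw [hst]; decide⟩;
     exact ⟨5, by rw [hst]; decide⟩; exact ⟨4, by rw [hst]; decide⟩;
     exact ⟨11, by rw [hst]; decide⟩; exact ⟨10, by rw [hst]; decide⟩;
     exact ⟨9, by rw [hst]; decide⟩; exact ⟨8, by rw [hst]; decide⟩]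

lemma Jadj_ne {s t : ℤ×ℤ} (h : Jadj s t) : s ≠ t := by
  rintro rfl
  obtain ⟨i, hi⟩ := h
  rw [sub_self] at hi
  fin_cases i <;> exact absurd hi.symm (by decide)

lemma adj2_h (x y : ℤ) : adj2 (x,y) (x+1,y) := by simp [adj2]
lemma adj2_v (x y : ℤ) : adj2 (x,y) (x,y+1) := by simp [adj2]

lemma code_h' (x y : ℤ) : (x,y) + (x+1,y) = hc x y := by
  simp only [hc, Prod.ext_iff, Prod.fst_add, Prod.snd_add]; constructor <;> ring
lemma code_v' (x y : ℤ) : (x,y) + (x,y+1) = vc x y := by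
  simp only [vc, Prod.ext_iff, Prod.fst_add, Prod.snd_add]; constructor <;> ring

lemma stepv_0 : stepv 0 = (2,0) := rfl
lemma stepv_1 : stepv 1 = (-2,0) := rfl
lemma stepv_2 : stepv 2 = (0,2) := rfl
lemma stepv_3 : stepv 3 = (0,-2) := rfl
lemma stepv_4 : stepv 4 = (1,1) := rfl
lemma stepv_5 : stepv 5 = (1,-1) := rfl
lemma stepv_6 : stepv 6 = (-1,1) := rfl
lemma stepv_7 : stepv 7 = (-1,-1) := rfl
lemma stepv_8 : stepv 8 = (2,2) := rfl
lemma stepv_9 : stepv 9 = (2,-2) := rfl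
lemma stepv_10 : stepv 10 = (-2,2) := rfl
lemma stepv_11 : stepv 11 = (-2,-2) := rfl

lemma jadj_help (u v : ℤ×ℤ) (i : Fin 12) (h1 : v.1 - u.1 = (stepv i).1)
    (h2 : v.2 - u.2 = (stepv i).2) : Jadj u v :=
  ⟨i, Prod.ext h1 h2⟩

/-- the four codes of edges of the unit square at (x,y) are pairwise J-adjacent -/
lemma square_jadj (x y : ℤ) (c c' : ℤ×ℤ)
    (hc1 : c ∈ ({hc x y, hc x (y+1), vc x y, vc (x+1) y} : Set (ℤ×ℤ)))
    (hc2 : c' ∈ ({hc x y, hc x (y+1), vc x y, vc (x+1) y} : Set (ℤ×ℤ)))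
    (hne : c ≠ c') : Jadj c c' := by
  simp only [Set.mem_insert_iff, Set.mem_singleton_iff] at hc1 hc2
  rcases hc1 with rfl|rfl|rfl|rfl <;> rcases hc2 with rfl|rfl|rfl|rfl <;>
    first
      | exact absurd rfl hne
      | (refine jadj_help _ _ 0 ?_ ?_ <;> simp [hc, vc, stepv_0] <;> omega)
      | (refine jadj_help _ _ 1 ?_ ?_ <;> simp [hc, vc, stepv_1] <;> omega)
      | (refine jadj_help _ _ 2 ?_ ?_ <;> simp [hc, vc, stepv_2] <;> omega)
      | (refine jadj_help _ _ 3 ?_ ?_ <;> simp [hc, vc, stepv_3] <;> omega)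
      | (refine jadj_help _ _ 4 ?_ ?_ <;> simp [hc, vc, stepv_4] <;> omega)
      | (refine jadj_help _ _ 5 ?_ ?_ <;> simp [hc, vc, stepv_5] <;> omega)
      | (refine jadj_help _ _ 6 ?_ ?_ <;> simp [hc, vc, stepv_6] <;> omega)
      | (refine jadj_help _ _ 7 ?_ ?_ <;> simp [hc, vc, stepv_7] <;> omega)

section Boundary

variable (C : Set (ℤ×ℤ)) (R : ℤ)

/-- adjacency avoiding the cluster C -/
def escAdj (a b : ℤ×ℤ) : Prop := adj2 a b ∧ a ∉ C ∧ b ∉ C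

def Far (z : ℤ×ℤ) : Prop := R < |z.1| ∨ R < |z.2|

/-- a vertex escapes to infinity avoiding C -/
def Esc (z : ℤ×ℤ) : Prop := z ∉ C ∧ ∃ w, Far R w ∧ ReflTransGen (escAdj C) z w

/-- the set of codes of boundary edges of C visible from infinity -/
def FF : Set (ℤ×ℤ) := {s | ∃ a b, adj2 a b ∧ a ∈ C ∧ Esc C R b ∧ a + b = s}

variable {C R}

variable (hR : ∀ a ∈ C, |a.1| ≤ R ∧ |a.2| ≤ R)

include hR in
lemma far_not_mem {z : ℤ×ℤ} (h : Far R z) : z ∉ C := by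
  intro hz
  have := hR z hz
  unfold Far at h
  omega

include hR in
lemma esc_of_far {z : ℤ×ℤ} (h : Far R z) : Esc C R z :=
  ⟨far_not_mem hR h, z, h, ReflTransGen.refl⟩

lemma esc_step {a b : ℤ×ℤ} (hab : adj2 a b) (ha : a ∉ C) (hb : Esc C R b) : Esc C R a := by
  obtain ⟨hbC, w, hw, hchain⟩ := hb
  exact ⟨ha, w, hw, ReflTransGen.head ⟨hab, ha, hbC⟩ hchain⟩

/-- membership of an edge in the boundary is determined by the `Esc` status of endpoints -/
lemma bnd_iff {a b : ℤ×ℤ} (hab : adj2 a b) :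
    a + b ∈ FF C R ↔ ¬(Esc C R a ↔ Esc C R b) := by
  constructor
  · rintro ⟨a', b', hab', ha', hb', he⟩
    rcases code_inj hab' hab he with ⟨h1, h2⟩ | ⟨h1, h2⟩
    · rw [h1] at ha'; rw [h2] at hb'
      intro hiff
      exact (hiff.2 hb').1 ha'
    · rw [h1] at ha'; rw [h2] at hb'
      intro hiff
      exact (hiff.1 hb').1 ha' 
  · intro hiff
    by_cases hea : Esc C R a
    · have heb : ¬ Esc C R b := fun h => hiff ⟨fun _ => h, fun _ => hea⟩
      have hbC : b ∈ C := by
        by_contra hbC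
        exact heb (esc_step (adj2_symm hab) hbC hea)
      exact ⟨b, a, adj2_symm hab, hbC, hea, add_comm b a⟩
    · have heb : Esc C R b := by
        by_contra heb
        exact hiff ⟨fun h => absurd h hea, fun h => absurd h heb⟩
      have haC : a ∈ C := by
        by_contra haC
        exact hea (esc_step hab haC heb)
      exact ⟨a, b, hab, haC, heb, rfl⟩

lemma chiFF {a b : ℤ×ℤ} (hab : adj2 a b) :
    χ (FF C R) (a+b) = xor (decide (Esc C R a)) (decide (Esc C R b)) := by
  by_cases hea : Esc C R a <;> by_cases heb : Esc C R b <;>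
    simp [χ, bnd_iff hab, hea, heb]

/-- the square-parity property for the boundary FF -/
lemma FF_square (x y : ℤ) :
    xor (χ (FF C R) (hc x y)) (χ (FF C R) (hc x (y+1)))
      = xor (χ (FF C R) (vc x y)) (χ (FF C R) (vc (x+1) y)) := by
  have h1 := chiFF (C := C) (R := R) (adj2_h x y)
  have h2 := chiFF (C := C) (R := R) (adj2_h x (y+1))
  have h3 := chiFF (C := C) (R := R) (adj2_v x y)
  have h4 := chiFF (C := C) (R := R) (adj2_v (x+1) y)
  rw [code_h'] at h1 h2
  rw [code_v'] at h3 h4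
  rw [h1, h2, h3, h4]
  generalize decide (Esc C R (x,y)) = e00
  generalize decide (Esc C R (x+1,y)) = e10
  generalize decide (Esc C R (x,y+1)) = e01
  generalize decide (Esc C R (x+1,y+1)) = e11
  cases e00 <;> cases e10 <;> cases e01 <;> cases e11 <;> rfl


lemma bool_xor_ne_ne {a b c d : Bool} (h1 : a ≠ b) (h2 : c ≠ d) : xor a c = xor b d := by
  revert h1 h2; cases a <;> cases b <;> cases c <;> cases d <;> decide

lemma bool_xor_eq_ne {a b c d : Bool} (h1 : a = b) (h2 : c ≠ d) : xor a c ≠ xor b d := by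
  revert h1 h2; cases a <;> cases b <;> cases c <;> cases d <;> decide

lemma bool_xor_eq_eq {a b c d : Bool} (h1 : a = b) (h2 : c = d) : xor a c = xor b d := by
  rw [h1, h2]

lemma decide_ne_of_not_iff {P Q : Prop} (h : ¬(P ↔ Q)) : decide P ≠ decide Q := by
  by_cases hp : P <;> by_cases hq : Q <;> simp_all

lemma decide_eq_of_iff {P Q : Prop} (h : P ↔ Q) : decide P = decide Q := by
  by_cases hp : P <;> by_cases hq : Q <;> simp_all

/-- walking along a discretely parametrized path -/
lemma reach_seg (P : ℤ×ℤ → Prop) (f : ℕ → ℤ×ℤ) (n : ℕ)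
    (hstep : ∀ k < n, adj2 (f k) (f (k+1))) (hP : ∀ k ≤ n, P (f k)) :
    ReflTransGen (fun u v => adj2 u v ∧ P u ∧ P v) (f 0) (f n) := by
  induction n with
  | zero => exact ReflTransGen.refl
  | succ n ih =>
    exact (ih (fun k hk => hstep k (by omega)) (fun k hk => hP k (by omega))).tail
      ⟨hstep n (by omega), hP n (by omega), hP (n+1) le_rfl⟩

lemma reach_line_h (P : ℤ×ℤ → Prop) (y x1 x2 : ℤ) (hP : ∀ x, P (x, y)) :
    ReflTransGen (fun u v => adj2 u v ∧ P u ∧ P v) (x1,y) (x2,y) := by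
  rcases le_total x1 x2 with h | h
  · have hn : ((x2 - x1).toNat : ℤ) = x2 - x1 := Int.toNat_of_nonneg (by omega)
    have := reach_seg P (fun k => (x1 + k, y)) (x2 - x1).toNat
      (fun k hk => by unfold adj2; push_cast; simp; omega) (fun k hk => hP _)
    simpa [hn] using this
  · have hn : ((x1 - x2).toNat : ℤ) = x1 - x2 := Int.toNat_of_nonneg (by omega)
    have := reach_seg P (fun k => (x1 - k, y)) (x1 - x2).toNat
      (fun k hk => by unfold adj2; push_cast; simp; omega) (fun k hk => hP _)
    simpa [hn] using this

lemma reach_line_v (P : ℤ×ℤ → Prop) (x y1 y2 : ℤ) (hP : ∀ y, P (x, y)) :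
    ReflTransGen (fun u v => adj2 u v ∧ P u ∧ P v) (x,y1) (x,y2) := by
  rcases le_total y1 y2 with h | h
  · have hn : ((y2 - y1).toNat : ℤ) = y2 - y1 := Int.toNat_of_nonneg (by omega)
    have := reach_seg P (fun k => (x, y1 + k)) (y2 - y1).toNat
      (fun k hk => by unfold adj2; push_cast; simp; omega) (fun k hk => hP _)
    simpa [hn] using this
  · have hn : ((y1 - y2).toNat : ℤ) = y1 - y2 := Int.toNat_of_nonneg (by omega)
    have := reach_seg P (fun k => (x, y1 - k)) (y1 - y2).toNat
      (fun k hk => by unfold adj2; push_cast; simp; omega) (fun k hk => hP _)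
    simpa [hn] using this

include hR in
lemma far_corner (hR0 : 0 ≤ R) : Far R (R+1, R+1) := by
  unfold Far; left; simp only; rw [abs_of_nonneg (by omega)]; omega

lemma far_reach (hR0 : 0 ≤ R) {z : ℤ×ℤ} (h : Far R z) :
    ReflTransGen (fun u v => adj2 u v ∧ Far R u ∧ Far R v) z (R+1, R+1) := by
  have hline : ∀ x', Far R (x', R+1) := by
    intro x'; unfold Far; right; simp only; rw [abs_of_nonneg (by omega)]; omega
  have hcol : ∀ y', Far R (R+1, y') := by
    intro y'; unfold Far; left; simp only; rw [abs_of_nonneg (by omega)]; omega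
  rcases h with h1 | h2
  · have v1 : ReflTransGen (fun u v => adj2 u v ∧ Far R u ∧ Far R v) (z.1, z.2) (z.1, R+1) :=
      reach_line_v (Far R) z.1 z.2 (R+1) (fun y => Or.inl h1)
    have v2 := reach_line_h (Far R) (R+1) z.1 (R+1) hline
    exact ReflTransGen.trans v1 v2
  · have v1 : ReflTransGen (fun u v => adj2 u v ∧ Far R u ∧ Far R v) (z.1, z.2) (R+1, z.2) :=
      reach_line_h (Far R) z.2 z.1 (R+1) (fun x => Or.inr h2)
    have v2 := reach_line_v (Far R) (R+1) z.2 (R+1) hcol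
    exact ReflTransGen.trans v1 v2

lemma not_FF_both_out {u v : ℤ×ℤ} (hu : u ∉ C) (hv : v ∉ C) (huv : adj2 u v) :
    u + v ∉ FF C R := by
  rintro ⟨a, b, hab, haC, hbE, he⟩
  rcases code_inj hab huv he with ⟨h1, _⟩ | ⟨h1, _⟩
  · exact hu (h1 ▸ haC)
  · exact hv (h1 ▸ haC)

lemma not_FF_both_in {u v : ℤ×ℤ} (hu : u ∈ C) (hv : v ∈ C) (huv : adj2 u v) :
    u + v ∉ FF C R := by
  rintro ⟨a, b, hab, haC, hbE, he⟩
  rcases code_inj hab huv he with ⟨_, h2⟩ | ⟨_, h2⟩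
  · exact hbE.1 (h2 ▸ hv)
  · exact hbE.1 (h2 ▸ hu)

lemma pot_const {Y : Set (ℤ×ℤ)} (θ : ℤ×ℤ → Bool)
    (hspec : ∀ u v, adj2 u v → (u+v ∈ Y ↔ θ u ≠ θ v)) {u v : ℤ×ℤ}
    (h : ReflTransGen (fun u v => adj2 u v ∧ u+v ∉ Y) u v) : θ u = θ v := by
  induction h with
  | refl => rfl
  | tail hstep hlast ih =>
    rename_i b c
    have : θ b = θ c := by
      by_contra hne
      exact hlast.2 ((hspec b c hlast.1).2 hne)
    rw [ih, this]

include hR in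
/-- THE KEY LEMMA: the boundary `FF` is connected under J-adjacency. -/
theorem FF_jconnected (hR0 : 0 ≤ R) (hC0 : ((0:ℤ),(0:ℤ)) ∈ C)
    (hconn : ∀ a ∈ C, ReflTransGen (fun u v => adj2 u v ∧ u ∈ C ∧ v ∈ C) ((0:ℤ),(0:ℤ)) a) :
    ∀ s ∈ FF C R, ∀ t ∈ FF C R,
      ReflTransGen (fun u v => Jadj u v ∧ u ∈ FF C R ∧ v ∈ FF C R) s t := by
  intro s hs t ht
  by_contra hnr
  set rJ : (ℤ×ℤ) → (ℤ×ℤ) → Prop :=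
    fun u v => Jadj u v ∧ u ∈ FF C R ∧ v ∈ FF C R with hrJ
  set X : Set (ℤ×ℤ) := {u | u ∈ FF C R ∧ ReflTransGen rJ s u} with hX
  have hsX : s ∈ X := ⟨hs, ReflTransGen.refl⟩
  have htX : t ∉ X := fun h => hnr h.2
  have hXsub : X ⊆ FF C R := fun u hu => hu.1
  have hclose : ∀ u ∈ X, ∀ v ∈ FF C R, Jadj u v → v ∈ X := by
    intro u hu v hv hj
    exact ⟨hv, hu.2.tail ⟨hj, hu.1, hv⟩⟩
  -- square parity for X
  have hsqX : ∀ x y : ℤ, xor (χ X (hc x y)) (χ X (hc x (y+1)))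
      = xor (χ X (vc x y)) (χ X (vc (x+1) y)) := by
    intro x y
    have hm1 : hc x y ∈ ({hc x y, hc x (y+1), vc x y, vc (x+1) y} : Set (ℤ×ℤ)) := by
      simp
    have hm2 : hc x (y+1) ∈ ({hc x y, hc x (y+1), vc x y, vc (x+1) y} : Set (ℤ×ℤ)) := by
      simp
    have hm3 : vc x y ∈ ({hc x y, hc x (y+1), vc x y, vc (x+1) y} : Set (ℤ×ℤ)) := by
      simp
    have hm4 : vc (x+1) y ∈ ({hc x y, hc x (y+1), vc x y, vc (x+1) y} : Set (ℤ×ℤ)) := by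
      simp
    by_cases hmix : ∃ c ∈ ({hc x y, hc x (y+1), vc x y, vc (x+1) y} : Set (ℤ×ℤ)),
        c ∈ FF C R ∧ c ∉ X
    · obtain ⟨c0, hc0sq, hc0F, hc0X⟩ := hmix
      have hnone : ∀ c ∈ ({hc x y, hc x (y+1), vc x y, vc (x+1) y} : Set (ℤ×ℤ)), c ∉ X := by
        intro c hcsq hcX
        rcases eq_or_ne c c0 with rfl | hne
        · exact hc0X hcX
        · exact hc0X (hclose c hcX c0 hc0F (square_jadj x y c c0 hcsq hc0sq hne))
      have e1 : χ X (hc x y) = false := by simp [χ, hnone _ hm1]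
      have e2 : χ X (hc x (y+1)) = false := by simp [χ, hnone _ hm2]
      have e3 : χ X (vc x y) = false := by simp [χ, hnone _ hm3]
      have e4 : χ X (vc (x+1) y) = false := by simp [χ, hnone _ hm4]
      rw [e1, e2, e3, e4]
    · push_neg at hmix
      have heq : ∀ c ∈ ({hc x y, hc x (y+1), vc x y, vc (x+1) y} : Set (ℤ×ℤ)),
          χ X c = χ (FF C R) c := by
        intro c hcsq
        exact decide_eq_of_iff ⟨fun h => hXsub h, fun h => hmix c hcsq h⟩
      rw [heq _ hm1, heq _ hm2, heq _ hm3, heq _ hm4]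
      exact FF_square x y
  -- the generic crossing chain
  have hchain : ∀ (Y : Set (ℤ×ℤ)), Y ⊆ FF C R →
      ∀ a b : ℤ×ℤ, adj2 a b → a ∈ C → Esc C R b → a+b ∉ Y →
      ReflTransGen (fun u v => adj2 u v ∧ u+v ∉ Y) ((0:ℤ),(0:ℤ)) (R+1, R+1) := by
    intro Y hYsub a b hab haC hbE hnY
    have c1 : ReflTransGen (fun u v => adj2 u v ∧ u+v ∉ Y) ((0:ℤ),(0:ℤ)) a := by
      refine ReflTransGen.mono ?_ _ _ (hconn a haC)
      rintro u v ⟨h1, h2, h3⟩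
      exact ⟨h1, fun hY => not_FF_both_in h2 h3 h1 (hYsub hY)⟩
    have c2 : ReflTransGen (fun u v => adj2 u v ∧ u+v ∉ Y) a b :=
      ReflTransGen.single ⟨hab, hnY⟩
    obtain ⟨hbC, w, hwFar, hwchain⟩ := hbE
    have c3 : ReflTransGen (fun u v => adj2 u v ∧ u+v ∉ Y) b w := by
      refine ReflTransGen.mono ?_ _ _ hwchain
      rintro u v ⟨h1, h2, h3⟩
      exact ⟨h1, fun hY => not_FF_both_out h2 h3 h1 (hYsub hY)⟩
    have c4 : ReflTransGen (fun u v => adj2 u v ∧ u+v ∉ Y) w (R+1, R+1) := by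
      refine ReflTransGen.mono ?_ _ _ (far_reach hR0 hwFar)
      rintro u v ⟨h1, h2, h3⟩
      exact ⟨h1, fun hY => not_FF_both_out (far_not_mem hR h2) (far_not_mem hR h3) h1 (hYsub hY)⟩
    exact ((c1.trans c2).trans c3).trans c4
  obtain ⟨ta, tb, htab, htaC, htbE, hte⟩ := ht
  obtain ⟨sa, sb, hsab, hsaC, hsbE, hse⟩ := hXsub hsX
  by_cases hpot : pot X ((0:ℤ),(0:ℤ)) = pot X (R+1, R+1)
  · -- use ψ and Y = FF \ X, crossing edge s ∈ X
    set ψ : ℤ×ℤ → Bool := fun z => xor (pot X z) (decide (Esc C R z)) with hψdef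
    have hψ : ∀ u v : ℤ×ℤ, adj2 u v → (u+v ∈ (FF C R \ X) ↔ ψ u ≠ ψ v) := by
      intro u v huv
      have h1 := pot_spec hsqX huv
      have h2 := bnd_iff (C := C) (R := R) huv
      by_cases hXm : u+v ∈ X <;> by_cases hFm : u+v ∈ FF C R
      · have e1 : pot X u ≠ pot X v := h1.1 hXm
        have e2 : decide (Esc C R u) ≠ decide (Esc C R v) :=
          decide_ne_of_not_iff (h2.1 hFm)
        simp only [Set.mem_diff]
        constructor
        · rintro ⟨_, hc⟩; exact absurd hXm hc
        · intro hne; exact absurd (bool_xor_ne_ne e1 e2) hne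
      · exact absurd (hXsub hXm) hFm
      · have e1 : pot X u = pot X v := by
          by_contra hne; exact hXm (h1.2 hne)
        have e2 : decide (Esc C R u) ≠ decide (Esc C R v) :=
          decide_ne_of_not_iff (h2.1 hFm)
        simp only [Set.mem_diff]
        exact iff_of_true ⟨hFm, hXm⟩ (bool_xor_eq_ne e1 e2)
      · have e1 : pot X u = pot X v := by
          by_contra hne; exact hXm (h1.2 hne)
        have e2 : decide (Esc C R u) = decide (Esc C R v) := by
          by_contra hne
          refine hFm (h2.2 ?_)
          intro hiff
          exact hne (decide_eq_of_iff hiff)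
        simp only [Set.mem_diff]
        refine iff_of_false (fun hh => hFm hh.1) ?_
        simp only [ne_eq, not_not]
        exact bool_xor_eq_eq e1 e2
    have hψne : ψ ((0:ℤ),(0:ℤ)) ≠ ψ (R+1, R+1) := by
      have e0 : decide (Esc C R ((0:ℤ),(0:ℤ))) = false := by
        simp only [decide_eq_false_iff_not]
        exact fun h => h.1 hC0
      have e1 : decide (Esc C R (R+1, R+1)) = true := by
        simp only [decide_eq_true_eq]
        exact esc_of_far hR (far_corner hR hR0)
      apply bool_xor_eq_ne hpot
      rw [e0, e1]; exact Bool.false_ne_true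
    have hcr := hchain (FF C R \ X) Set.diff_subset sa sb hsab hsaC hsbE
      (by rw [hse]; simp only [Set.mem_diff]; rintro ⟨_, h⟩; exact h hsX)
    exact hψne (pot_const ψ hψ hcr)
  · -- use pot and Y = X, crossing edge t ∉ X
    have hcr := hchain X hXsub ta tb htab htaC htbE (by rw [hte]; exact htX)
    exact hpot (pot_const (pot X) (fun u v huv => pot_spec hsqX huv) hcr)

end Boundary



section Walker

variable {α : Type*} [DecidableEq α] (r : α → α → Prop)

def reachN (S : Finset α) : ℕ → α → α → Prop
  | 0 => fun a b => a = b
  | (n+1) => fun a b => ∃ c, (r a c ∧ a ∈ S ∧ c ∈ S) ∧ reachN S n c b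

variable {r}

lemma reachN_tail {S : Finset α} {n : ℕ} {a b c : α} (h : reachN r S n a b)
    (hstep : r b c ∧ b ∈ S ∧ c ∈ S) : reachN r S (n+1) a c := by
  induction n generalizing a with
  | zero => exact ⟨c, h ▸ hstep, rfl⟩
  | succ n ih =>
    obtain ⟨e, h1, h2⟩ := h
    exact ⟨e, h1, ih h2⟩

lemma reachN_last {S : Finset α} {n : ℕ} {a b : α} (h : reachN r S (n+1) a b) :
    ∃ c, reachN r S n a c ∧ (r c b ∧ c ∈ S ∧ b ∈ S) := by
  induction n generalizing a with
  | zero =>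
    obtain ⟨c, h1, h2⟩ := h
    exact ⟨a, rfl, h2 ▸ h1⟩
  | succ n ih =>
    obtain ⟨e, h1, h2⟩ := h
    obtain ⟨c, hc1, hc2⟩ := ih h2
    exact ⟨c, ⟨e, h1, hc1⟩, hc2⟩

lemma reach_iff_exists {S : Finset α} {a b : α} :
    Relation.ReflTransGen (fun u v => r u v ∧ u ∈ S ∧ v ∈ S) a b ↔ ∃ n, reachN r S n a b := by
  constructor
  · intro h
    induction h with
    | refl => exact ⟨0, rfl⟩
    | tail hstep hlast ih =>
      obtain ⟨n, hn⟩ := ih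
      exact ⟨n+1, reachN_tail hn hlast⟩
  · rintro ⟨n, hn⟩
    induction n generalizing a with
    | zero => exact hn ▸ Relation.ReflTransGen.refl
    | succ n ih =>
      obtain ⟨c, h1, h2⟩ := hn
      exact Relation.ReflTransGen.head h1 (ih h2)

variable (hirr : ∀ a, ¬ r a a) (hsymm : ∀ a b, r a b → r b a)

include hirr hsymm in
/-- a connected finite set has a closed spanning walk of the right length -/
lemma spanning_walk (n : ℕ) : ∀ (S : Finset α) (x0 : α), S.card ≤ n → x0 ∈ S →
    (∀ a ∈ S, Relation.ReflTransGen (fun u v => r u v ∧ u ∈ S ∧ v ∈ S) x0 a) →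
    ∃ l : List α, l.Chain' r ∧ l.head? = some x0 ∧ l.toFinset = S ∧
      l.length = 2 * S.card - 1 := by
  induction n with
  | zero => intro S x0 hcard hx0 _; exact absurd (Finset.card_pos.2 ⟨x0, hx0⟩) (by omega)
  | succ n ih =>
    intro S x0 hcard hx0 hconn
    by_cases hsmall : S.card ≤ 1
    · have hS : S = {x0} := by
        apply Finset.eq_singleton_iff_unique_mem.2
        refine ⟨hx0, fun y hy => ?_⟩
        by_contra hne
        have := Finset.one_lt_card.2 ⟨y, hy, x0, hx0, hne⟩
        omega
      refine ⟨[x0], List.isChain_singleton x0, rfl, by simp [hS], by simp [hS]⟩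
    -- distances
    · have hex : ∀ a ∈ S, ∃ m, reachN r S m x0 a := fun a ha =>
        reach_iff_exists.1 (hconn a ha)
      set d : α → ℕ := fun a =>
        if h : ∃ m, reachN r S m x0 a then Nat.find h else 0 with hd
      have hdspec : ∀ a ∈ S, reachN r S (d a) x0 a := by
        intro a ha
        have h := hex a ha
        simp only [hd, dif_pos h]
        exact Nat.find_spec h
      have hdmin : ∀ a ∈ S, ∀ m, reachN r S m x0 a → d a ≤ m := by
        intro a ha m hm
        have h := hex a ha
        simp only [hd, dif_pos h]
        exact Nat.find_le hm
      have hd0 : ∀ a ∈ S, d a = 0 → a = x0 := by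
        intro a ha h0
        have := hdspec a ha
        rw [h0] at this
        exact this.symm
      -- the farthest point
      obtain ⟨x, hxS, hxmax⟩ := S.exists_max_image d ⟨x0, hx0⟩
      have hdx : 1 ≤ d x := by
        by_contra h
        have hx_eq : x = x0 := hd0 x hxS (by omega)
        obtain ⟨y, hyS, hyne⟩ : ∃ y ∈ S, y ≠ x0 := by
          by_contra hall
          push_neg at hall
          have : S ⊆ {x0} := fun z hz => by
            rcases eq_or_ne z x0 with rfl | hne
            · simp
            · exact absurd hne (by simpa using hall z hz)
          have := Finset.card_le_card this
          simp at this
          omega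
        have h1 : 1 ≤ d y := by
          by_contra h2
          exact hyne (hd0 y hyS (by omega))
        have := hxmax y hyS
        omega
      have hxne : x ≠ x0 := by
        intro h
        rw [h] at hdx
        have : d x0 = 0 := by
          apply Nat.le_antisymm _ (Nat.zero_le _)
          exact hdmin x0 hx0 0 rfl
        omega
      -- S minus x is still connected
      have hconn' : ∀ u ∈ S, u ≠ x →
          Relation.ReflTransGen
            (fun a b => r a b ∧ a ∈ S.erase x ∧ b ∈ S.erase x) x0 u := by
        have key : ∀ m, ∀ u ∈ S, u ≠ x → d u ≤ m →
            Relation.ReflTransGen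
              (fun a b => r a b ∧ a ∈ S.erase x ∧ b ∈ S.erase x) x0 u := by
          intro m
          induction m with
          | zero =>
            intro u hu hune hdu
            rw [hd0 u hu (by omega)]
          | succ m ihm =>
            intro u hu hune hdu
            rcases Nat.eq_zero_or_pos (d u) with h0 | hposd
            · rw [hd0 u hu h0]
            · have hspec := hdspec u hu
              obtain ⟨k, hk⟩ : ∃ k, d u = k + 1 := ⟨d u - 1, by omega⟩
              rw [hk] at hspec
              obtain ⟨c, hc1, hc2⟩ := reachN_last hspec
              have hcS : c ∈ S := hc2.2.1
              have hdc : d c ≤ k := hdmin c hcS k hc1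
              have hcne : c ≠ x := by
                intro h
                rw [h] at hdc
                have := hxmax u hu
                omega
              have := ihm c hcS hcne (by omega)
              exact this.tail ⟨hc2.1, Finset.mem_erase.2 ⟨hcne, hcS⟩,
                Finset.mem_erase.2 ⟨hune, hu⟩⟩
        intro u hu hune
        exact key (d u) u hu hune le_rfl
      -- apply IH
      have hcard' : (S.erase x).card ≤ n := by
        have := Finset.card_erase_of_mem hxS
        omega
      have hx0' : x0 ∈ S.erase x := Finset.mem_erase.2 ⟨fun h => hxne h.symm, hx0⟩
      obtain ⟨l', hch, hhd, htf, hlen⟩ := ih (S.erase x) x0 hcard' hx0'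
        (fun a ha => hconn' a (Finset.mem_erase.1 ha).2 (Finset.mem_erase.1 ha).1)
      -- find the neighbour y of x
      obtain ⟨y, hy1, hy2⟩ : ∃ y, (r y x ∧ y ∈ S ∧ x ∈ S) ∧ y ∈ S.erase x := by
        have hreach := hconn x hxS
        rcases hreach.cases_tail with heq | ⟨b, hb1, hb2⟩
        · exact absurd heq hxne
        · exact ⟨b, hb2, Finset.mem_erase.2 ⟨fun h => hirr x (h ▸ hb2.1), hb2.2.1⟩⟩
      -- splice x into the walk at y
      have hymem : y ∈ l' := by
        rw [← List.mem_toFinset, htf]; exact hy2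
      obtain ⟨l1, l2, hsplit⟩ := List.append_of_mem hymem
      refine ⟨l1 ++ y :: x :: y :: l2, ?_, ?_, ?_, ?_⟩
      · rw [hsplit] at hch
        rw [List.Chain', List.isChain_append] at hch ⊢
        obtain ⟨c1, c2, hmid⟩ := hch
        refine ⟨c1, ?_, ?_⟩
        · rw [List.isChain_cons_cons]
          refine ⟨hy1.1, ?_⟩
          rw [List.isChain_cons_cons]
          exact ⟨hsymm _ _ hy1.1, c2⟩
        · intro a ha b hb
          simp only [List.head?_cons, Option.mem_some_iff] at hb
          subst hb
          exact hmid a ha y (by simp)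
      · rw [hsplit] at hhd
        cases l1 with
        | nil => simpa using hhd
        | cons a t => simpa using hhd
      · have h1 : (l1 ++ y :: x :: y :: l2).toFinset
            = insert x ((l1 ++ y :: l2).toFinset) := by
          ext z
          simp only [List.mem_toFinset, List.mem_append, List.mem_cons,
            Finset.mem_insert]
          tauto
        rw [hsplit] at htf
        rw [h1, htf]
        exact Finset.insert_erase hxS
      · have h2 : (l1 ++ y :: x :: y :: l2).length = l'.length + 2 := by
          rw [hsplit]
          simp [List.length_append]
          omega
        rw [h2, hlen, Finset.card_erase_of_mem hxS]
        have : 2 ≤ S.card := by omega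
        omega

end Walker


/-- discrete intermediate value along a chain in C -/
lemma col_hit {C : Set (ℤ×ℤ)} {u v : ℤ×ℤ}
    (h : Relation.ReflTransGen (fun a b => adj2 a b ∧ a ∈ C ∧ b ∈ C) u v)
    (hu : u ∈ C) : ∀ j : ℤ, u.1 ≤ j → j ≤ v.1 → ∃ w ∈ C, w.1 = j := by
  induction h with
  | refl => exact fun j h1 h2 => ⟨u, hu, by omega⟩
  | tail hstep hlast ih =>
    rename_i b c
    intro j h1 h2
    by_cases hj : j ≤ b.1
    · exact ih j h1 hj
    · have hadj := hlast.1
      have : c.1 ≤ b.1 + 1 := by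
        rcases adj2_cases hadj with h|h|h|h <;> rw [h] <;> simp <;> omega
      exact ⟨c, hlast.2.2, by omega⟩

lemma reach_seg' (P : ℤ×ℤ → Prop) (f : ℕ → ℤ×ℤ) (n : ℕ) (a b : ℤ×ℤ)
    (ha : f 0 = a) (hb : f n = b)
    (hstep : ∀ k < n, adj2 (f k) (f (k+1))) (hP : ∀ k ≤ n, P (f k)) :
    Relation.ReflTransGen (fun u v => adj2 u v ∧ P u ∧ P v) a b :=
  ha ▸ hb ▸ reach_seg P f n hstep hP

/-- MAIN COMBINATORIAL THEOREM: a finite cluster is surrounded by a J-connected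
walk of closed boundary edges, starting on the positive x-axis. -/
theorem main_combin (C : Set (ℤ×ℤ)) (hfin : C.Finite) (h0 : ((0:ℤ),(0:ℤ)) ∈ C)
    (hconn : ∀ a ∈ C, Relation.ReflTransGen
      (fun u v => adj2 u v ∧ u ∈ C ∧ v ∈ C) ((0:ℤ),(0:ℤ)) a) :
    ∃ (n k : ℕ) (l : List (ℤ×ℤ)), 0 < n ∧ k < n ∧
      l.Chain' Jadj ∧ l.head? = some (2*(k:ℤ)+1, 0) ∧ l.length = 2*n - 1 ∧
      l.toFinset.card = n ∧
      (∀ s ∈ l, ∃ a b : ℤ×ℤ, adj2 a b ∧ a ∈ C ∧ b ∉ C ∧ a + b = s) := by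
  classical
  have hmemT : ∀ a, a ∈ hfin.toFinset ↔ a ∈ C := fun a => Set.Finite.mem_toFinset hfin
  -- a bound on C
  obtain ⟨R, hR0, hR⟩ : ∃ R : ℤ, 0 ≤ R ∧ ∀ a ∈ C, |a.1| ≤ R ∧ |a.2| ≤ R := by
    refine ⟨((hfin.toFinset.sup fun a => (max |a.1| |a.2|).toNat : ℕ) : ℤ),
      Int.natCast_nonneg _, ?_⟩
    intro a ha
    have hmem : a ∈ hfin.toFinset := (hmemT a).2 ha
    have h1 : ((max |a.1| |a.2|).toNat : ℤ)
        ≤ ((hfin.toFinset.sup fun a => (max |a.1| |a.2|).toNat : ℕ) : ℤ) := by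
      exact_mod_cast Finset.le_sup (f := fun a => (max |a.1| |a.2|).toNat) hmem
    have habs : (0:ℤ) ≤ max |a.1| |a.2| := le_max_of_le_left (abs_nonneg _)
    rw [Int.toNat_of_nonneg habs] at h1
    exact ⟨le_trans (le_max_left _ _) h1, le_trans (le_max_right _ _) h1⟩
  -- the maximal x-axis point
  obtain ⟨k, hkC, hknot⟩ : ∃ k : ℕ, ((k:ℤ), (0:ℤ)) ∈ C ∧
      ∀ j : ℤ, (k:ℤ) < j → (j, (0:ℤ)) ∉ C := by
    set Sx : Finset ℕ := (hfin.toFinset.filter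
      (fun a => a.2 = 0 ∧ 0 ≤ a.1)).image (fun a => a.1.toNat) with hSx
    have hSxne : Sx.Nonempty := ⟨(0:ℤ).toNat, Finset.mem_image.2
      ⟨((0:ℤ),(0:ℤ)), Finset.mem_filter.2 ⟨(hmemT _).2 h0, rfl, le_refl 0⟩, rfl⟩⟩
    refine ⟨Sx.max' hSxne, ?_, ?_⟩
    · have hmax := Sx.max'_mem hSxne
      obtain ⟨a, hamem, haeq⟩ := Finset.mem_image.1 hmax
      obtain ⟨haT, ha2, ha1⟩ := Finset.mem_filter.1 hamem
      have ha : a = (((Sx.max' hSxne : ℕ):ℤ), (0:ℤ)) := by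
        rcases a with ⟨a1, a2⟩
        simp only [Prod.mk.injEq]
        simp only at ha1 ha2 haeq
        omega
      rw [← ha]; exact (hmemT a).1 haT
    · intro j hj hmem
      have hj0 : 0 ≤ j := by omega
      have hjm : j.toNat ∈ Sx := Finset.mem_image.2
        ⟨(j, (0:ℤ)), Finset.mem_filter.2 ⟨(hmemT _).2 hmem, rfl, hj0⟩, rfl⟩
      have := Sx.le_max' _ hjm
      omega
  have hkR : (k:ℤ) ≤ R := by
    have h1 := (hR _ hkC).1
    have h2 : |((k:ℤ), (0:ℤ)).1| = (k:ℤ) := abs_of_nonneg (Int.natCast_nonneg _)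
    omega
  -- the crossing edge on the x-axis
  have hesc_k : Esc C R ((k:ℤ)+1, (0:ℤ)) := by
    refine ⟨hknot _ (by omega), (R+1, 0), Or.inl (by
      simp only
      rw [abs_of_nonneg (by omega)]; omega), ?_⟩
    have hch := reach_seg' (fun z => z ∉ C) (fun i => ((k:ℤ)+1+i, (0:ℤ))) (R - k).toNat
      ((k:ℤ)+1, (0:ℤ)) (R+1, 0)
      (by norm_num)
      (by
        show ((k:ℤ)+1+(((R - (k:ℤ)).toNat : ℕ):ℤ), (0:ℤ)) = (R+1, 0)
        have hcast : ((R - (k:ℤ)).toNat : ℤ) = R - k := Int.toNat_of_nonneg (by omega)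
        rw [hcast]
        simp only [Prod.mk.injEq]
        exact ⟨by omega, trivial⟩)
      (fun i hi => by unfold adj2; push_cast; simp; omega)
      (fun i hi => hknot _ (by push_cast; omega))
    exact Relation.ReflTransGen.mono (fun u v h => ⟨h.1, h.2.1, h.2.2⟩) _ _ hch
  have hek : hc (k:ℤ) 0 ∈ FF C R :=
    ⟨((k:ℤ), 0), ((k:ℤ)+1, 0), adj2_h _ _, hkC, hesc_k, code_h' _ _⟩
  -- column tops
  have hcols : ∀ j : ℕ, j ≤ k → ∃ y : ℤ, ((j:ℤ), y) ∈ C := by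
    intro j hj
    obtain ⟨w, hw, hw1⟩ := col_hit (hconn _ hkC) h0 (j:ℤ)
      (by simp only; omega) (by simp only; omega)
    exact ⟨w.2, by rw [show ((j:ℤ), w.2) = w from by rw [← hw1]]; exact hw⟩
  have hmtotal : ∀ j : ℕ, ∃ m : ℤ, j ≤ k →
      (((j:ℤ), m) ∈ C ∧ ∀ y, m < y → ((j:ℤ), y) ∉ C) := by
    intro j
    by_cases hj : j ≤ k
    · obtain ⟨y0, hy0⟩ := hcols j hj
      have hne : ((hfin.toFinset.filter (fun a => a.1 = (j:ℤ))).image Prod.snd).Nonempty :=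
        ⟨y0, Finset.mem_image.2 ⟨((j:ℤ), y0),
          Finset.mem_filter.2 ⟨(hmemT _).2 hy0, rfl⟩, rfl⟩⟩
      refine ⟨((hfin.toFinset.filter (fun a => a.1 = (j:ℤ))).image Prod.snd).max' hne,
        fun _ => ⟨?_, ?_⟩⟩
      · have hmax := Finset.max'_mem _ hne
        obtain ⟨a, hamem, haeq⟩ := Finset.mem_image.1 hmax
        obtain ⟨haT, ha1⟩ := Finset.mem_filter.1 hamem
        have haC := (hmemT a).1 haT
        rcases a with ⟨a1, a2⟩
        simp only at ha1 haeq
        subst ha1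
        subst haeq
        exact haC
      · intro y hy hymem
        have hmem2 : y ∈ (hfin.toFinset.filter (fun a => a.1 = (j:ℤ))).image Prod.snd :=
          Finset.mem_image.2 ⟨((j:ℤ), y), Finset.mem_filter.2 ⟨(hmemT _).2 hymem, rfl⟩, rfl⟩
        have := Finset.le_max' _ _ hmem2
        omega
    · exact ⟨0, fun h => absurd h hj⟩
  choose mj hmj using hmtotal
  have htopE : ∀ j : ℕ, j ≤ k → vc (j:ℤ) (mj j) ∈ FF C R := by
    intro j hj
    obtain ⟨hin, hout⟩ := hmj j hj
    have hmjR : mj j ≤ R := by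
      have h1 : |((j:ℤ), mj j).2| ≤ R := (hR _ hin).2
      have h2 : ((j:ℤ), mj j).2 = mj j := rfl
      rw [h2] at h1
      have := le_abs_self (mj j)
      omega
    have hesc : Esc C R ((j:ℤ), mj j + 1) := by
      refine ⟨hout _ (by omega), ((j:ℤ), R+1), Or.inr (by
        simp only
        rw [abs_of_nonneg (by omega)]; omega), ?_⟩
      have hch := reach_seg' (fun z => z ∉ C) (fun i => ((j:ℤ), mj j + 1 + i)) (R - mj j).toNat
        ((j:ℤ), mj j + 1) ((j:ℤ), R+1)
        (by norm_num)
        (by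
          show ((j:ℤ), mj j + 1 + (((R - mj j).toNat : ℕ):ℤ)) = ((j:ℤ), R+1)
          have hcast : ((R - mj j).toNat : ℤ) = R - mj j := Int.toNat_of_nonneg (by omega)
          rw [hcast]
          simp only [Prod.mk.injEq]
          exact ⟨trivial, by omega⟩)
        (fun i hi => by unfold adj2; push_cast; simp; omega)
        (fun i hi => hout _ (by push_cast; omega))
      exact Relation.ReflTransGen.mono (fun u v h => ⟨h.1, h.2.1, h.2.2⟩) _ _ hch
    exact ⟨((j:ℤ), mj j), ((j:ℤ), mj j + 1), adj2_v _ _, hin, hesc, code_v' _ _⟩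
  -- the boundary as a finset
  set cand : Finset (ℤ×ℤ) := hfin.toFinset.biUnion (fun a =>
    {a + (a.1+1, a.2), a + (a.1-1, a.2), a + (a.1, a.2+1), a + (a.1, a.2-1)}) with hcand
  set FFS : Finset (ℤ×ℤ) := cand.filter (fun s => s ∈ FF C R) with hFFS
  have mem_FFS : ∀ s, s ∈ FFS ↔ s ∈ FF C R := by
    intro s
    constructor
    · exact fun h => (Finset.mem_filter.1 h).2
    · intro hs
      refine Finset.mem_filter.2 ⟨?_, hs⟩
      obtain ⟨a, b, hab, haC, hbE, he⟩ := hs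
      refine Finset.mem_biUnion.2 ⟨a, (hmemT a).2 haC, ?_⟩
      rcases adj2_cases hab with h|h|h|h <;> subst h <;> subst he <;> simp
  have hekS : hc (k:ℤ) 0 ∈ FFS := (mem_FFS _).2 hek
  have hnpos : 0 < FFS.card := Finset.card_pos.2 ⟨_, hekS⟩
  have hkn : k + 1 ≤ FFS.card := by
    have hmaps : ∀ j ∈ Finset.range (k+1), vc (j:ℤ) (mj j) ∈ FFS := by
      intro j hj
      exact (mem_FFS _).2 (htopE j (by simp at hj; omega))
    calc k + 1 = (Finset.range (k+1)).card := by simp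
    _ ≤ FFS.card := Finset.card_le_card_of_injOn (fun j => vc (j:ℤ) (mj j)) hmaps
        (fun j hj j' hj' heq => by
          simp only [vc, Prod.mk.injEq] at heq
          omega)
  -- spanning walk
  have hconnS : ∀ a ∈ FFS, Relation.ReflTransGen
      (fun u v => Jadj u v ∧ u ∈ FFS ∧ v ∈ FFS) (hc (k:ℤ) 0) a := by
    intro a ha
    have := FF_jconnected hR hR0 h0 hconn _ hek a ((mem_FFS _).1 ha)
    exact Relation.ReflTransGen.mono
      (fun u v h => ⟨h.1, (mem_FFS _).2 h.2.1, (mem_FFS _).2 h.2.2⟩) _ _ this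
  obtain ⟨l, hlch, hlhd, hltf, hllen⟩ := spanning_walk (fun a h => (Jadj_ne h) rfl)
    (fun a b h => Jadj_symm h) FFS.card FFS (hc (k:ℤ) 0) le_rfl hekS hconnS
  refine ⟨FFS.card, k, l, hnpos, by omega, hlch, ?_, hllen, by rw [hltf], ?_⟩
  · rw [hlhd]; rfl
  · intro s hs
    have hsF : s ∈ FF C R := (mem_FFS _).1 (hltf ▸ List.mem_toFinset.2 hs)
    obtain ⟨a, b, hab, haC, hbE, he⟩ := hsF
    exact ⟨a, b, hab, haC, hbE.1, he⟩

section Embed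

variable (d : ℕ)

/-- embedding of the plane into ℤ^d -/
def emb (a : ℤ×ℤ) : Fin d → ℤ := fun i => if (i:ℕ) = 0 then a.1 else if (i:ℕ) = 1 then a.2 else 0

variable (hd : 2 ≤ d)

include hd in
lemma emb_adj {a b : ℤ×ℤ} (h : adj2 a b) : (Percolation.zdGraph d).Adj (emb d a) (emb d b) := by
  have h0 : (0:ℕ) < d := by omega
  have h1 : (1:ℕ) < d := by omega
  show (∑ i, |emb d a i - emb d b i|) = 1
  have hsub : ({⟨0, h0⟩, ⟨1, h1⟩} : Finset (Fin d)) ⊆ Finset.univ := Finset.subset_univ _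
  have hzero : ∀ i ∈ Finset.univ, i ∉ ({⟨0, h0⟩, ⟨1, h1⟩} : Finset (Fin d)) →
      |emb d a i - emb d b i| = 0 := by
    intro i _ hi
    simp only [Finset.mem_insert, Finset.mem_singleton] at hi
    push_neg at hi
    have hi0 : (i:ℕ) ≠ 0 := fun hh => hi.1 (Fin.ext hh)
    have hi1 : (i:ℕ) ≠ 1 := fun hh => hi.2 (Fin.ext hh)
    simp [emb, hi0, hi1]
  rw [← Finset.sum_subset hsub hzero]
  have hne : (⟨0, h0⟩ : Fin d) ≠ ⟨1, h1⟩ := by simp [Fin.ext_iff]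
  rw [Finset.sum_pair hne]
  have e1 : emb d a ⟨0, h0⟩ = a.1 := by simp [emb]
  have e2 : emb d b ⟨0, h0⟩ = b.1 := by simp [emb]
  have e3 : emb d a ⟨1, h1⟩ = a.2 := by simp [emb]
  have e4 : emb d b ⟨1, h1⟩ = b.2 := by simp [emb]
  rw [e1, e2, e3, e4]
  rcases adj2_cases h with hb|hb|hb|hb <;> subst hb <;> simp

include hd in
lemma emb_inj : Function.Injective (emb d) := by
  have h0 : (0:ℕ) < d := by omega
  have h1 : (1:ℕ) < d := by omega
  intro a b hab
  have e1 := congrFun hab ⟨0, h0⟩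
  have e2 := congrFun hab ⟨1, h1⟩
  simp only [emb] at e1 e2
  norm_num at e1 e2
  exact Prod.ext e1 e2

lemma emb_zero : emb d ((0:ℤ), (0:ℤ)) = (0 : Fin d → ℤ) := by
  funext i
  simp only [emb]
  split <;> [rfl; split <;> rfl]

def validCode (s : ℤ×ℤ) : Prop := (s.1 % 2 = 1 ∧ s.2 % 2 = 0) ∨ (s.1 % 2 = 0 ∧ s.2 % 2 = 1)

lemma code_valid {a b : ℤ×ℤ} (h : adj2 a b) : validCode (a+b) := by
  unfold validCode
  rcases adj2_cases h with hb|hb|hb|hb <;> subst hb <;>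
    simp only [Prod.fst_add, Prod.snd_add] <;> omega

lemma valid_decomp {s : ℤ×ℤ} (h : validCode s) : ∃ a b, adj2 a b ∧ a + b = s := by
  unfold validCode at h
  rcases h with ⟨h1, h2⟩ | ⟨h1, h2⟩
  · refine ⟨((s.1-1)/2, s.2/2), ((s.1-1)/2 + 1, s.2/2), ?_, ?_⟩
    · exact Or.inr ⟨rfl, Or.inr rfl⟩
    · have : ((s.1-1)/2) + ((s.1-1)/2 + 1) = s.1 := by omega
      have h2' : s.2/2 + s.2/2 = s.2 := by omega
      simp only [Prod.ext_iff, Prod.fst_add, Prod.snd_add]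
      exact ⟨this, h2'⟩
  · refine ⟨(s.1/2, (s.2-1)/2), (s.1/2, (s.2-1)/2 + 1), ?_, ?_⟩
    · exact Or.inl ⟨rfl, Or.inr rfl⟩
    · simp only [Prod.ext_iff, Prod.fst_add, Prod.snd_add]
      constructor <;> omega

include hd in
lemma emb_edge_mem {a b : ℤ×ℤ} (h : adj2 a b) :
    s(emb d a, emb d b) ∈ (Percolation.zdGraph d).edgeSet :=
  (Percolation.zdGraph d).mem_edgeSet.2 (emb_adj d hd h)

/-- decode an edge code into an edge of ℤ^d -/
noncomputable def decodeE (s : ℤ×ℤ) : (Percolation.zdGraph d).edgeSet :=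
  if h : validCode s then
    ⟨s(emb d (valid_decomp h).choose, emb d (valid_decomp h).choose_spec.choose),
      emb_edge_mem d hd (valid_decomp h).choose_spec.choose_spec.1⟩
  else
    ⟨s(emb d ((0:ℤ),(0:ℤ)), emb d ((1:ℤ),(0:ℤ))), emb_edge_mem d hd (adj2_h 0 0)⟩

include hd in
lemma decodeE_code {a b : ℤ×ℤ} (h : adj2 a b) :
    decodeE d hd (a+b) = ⟨s(emb d a, emb d b), emb_edge_mem d hd h⟩ := by
  have hv : validCode (a+b) := code_valid h
  unfold decodeE
  rw [dif_pos hv]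
  have hspec := (valid_decomp hv).choose_spec.choose_spec
  apply Subtype.ext
  show s(emb d _, emb d _) = s(emb d a, emb d b)
  obtain ⟨c1, c2, hc, hgoal⟩ : ∃ c1 c2, (adj2 c1 c2 ∧ c1 + c2 = a + b) ∧
      s(emb d (valid_decomp hv).choose, emb d (valid_decomp hv).choose_spec.choose)
        = s(emb d c1, emb d c2) := ⟨_, _, hspec, rfl⟩
  rw [hgoal]
  rcases code_inj hc.1 h hc.2 with ⟨h1, h2⟩ | ⟨h1, h2⟩
  · rw [h1, h2]
  · rw [h1, h2]
    exact Sym2.eq_swap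

include hd in
lemma decodeE_inj {s t : ℤ×ℤ} (hs : validCode s) (ht : validCode t)
    (h : decodeE d hd s = decodeE d hd t) : s = t := by
  obtain ⟨a, b, hab, he⟩ := valid_decomp hs
  obtain ⟨a', b', hab', he'⟩ := valid_decomp ht
  subst he he'
  rw [decodeE_code d hd hab, decodeE_code d hd hab'] at h
  have h2 : s(emb d a, emb d b) = s(emb d a', emb d b') := congrArg Subtype.val h
  rw [Sym2.eq_iff] at h2
  rcases h2 with ⟨h3, h4⟩ | ⟨h3, h4⟩
  · rw [emb_inj d hd h3, emb_inj d hd h4]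
  · rw [emb_inj d hd h3, emb_inj d hd h4, add_comm]

end Embed

section ClusterSide

open Percolation

variable (d : ℕ) (hd : 2 ≤ d) (ω : Config (zdGraph d))

/-- one open planar step -/
def pstep : ℤ×ℤ → ℤ×ℤ → Prop := fun a b => adj2 a b ∧ ω (decodeE d hd (a+b)) = true

/-- the planar cluster of the origin -/
def PC : Set (ℤ×ℤ) := {u | Relation.ReflTransGen (pstep d hd ω) ((0:ℤ),(0:ℤ)) u}

lemma PC_zero : ((0:ℤ),(0:ℤ)) ∈ PC d hd ω := Relation.ReflTransGen.refl

lemma PC_conn : ∀ a ∈ PC d hd ω, Relation.ReflTransGen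
    (fun u v => adj2 u v ∧ u ∈ PC d hd ω ∧ v ∈ PC d hd ω) ((0:ℤ),(0:ℤ)) a := by
  intro a ha
  unfold PC at ha
  induction ha with
  | refl => exact Relation.ReflTransGen.refl
  | tail h1 h2 ih =>
    exact ih.tail ⟨h2.1, h1, h1.tail h2⟩

lemma PC_closed {a b : ℤ×ℤ} (ha : a ∈ PC d hd ω) (hb : b ∉ PC d hd ω) (hab : adj2 a b) :
    ω (decodeE d hd (a+b)) = false := by
  by_contra hne
  rw [Bool.not_eq_false] at hne
  exact hb (ha.tail ⟨hab, hne⟩)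

lemma PC_sub : ∀ u ∈ PC d hd ω, emb d u ∈ cluster (zdGraph d) ω (0 : Fin d → ℤ) := by
  have aux : ∀ u, Relation.ReflTransGen (pstep d hd ω) ((0:ℤ),(0:ℤ)) u →
      ∃ w : (zdGraph d).Walk (emb d ((0:ℤ),(0:ℤ))) (emb d u), IsOpenWalk (zdGraph d) ω w := by
    intro u hu
    induction hu with
    | refl =>
      refine ⟨SimpleGraph.Walk.nil, ?_⟩
      intro e he
      simp at he
    | tail h1 h2 ih =>
      rename_i b c
      obtain ⟨w, hw⟩ := ih
      refine ⟨w.append ((SimpleGraph.Walk.cons (emb_adj d hd h2.1) SimpleGraph.Walk.nil)), ?_⟩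
      intro e he
      rw [SimpleGraph.Walk.edges_append] at he
      rcases List.mem_append.1 he with hL | hR
      · exact hw e hL
      · simp only [SimpleGraph.Walk.edges_cons, SimpleGraph.Walk.edges_nil,
          List.mem_singleton] at hR
        have hcongr : ∀ (x y : (zdGraph d).edgeSet), x.val = y.val → ω x = ω y :=
          fun x y h => by rw [Subtype.ext h]
        have hval : (decodeE d hd (b+c)).val = s(emb d b, emb d c) :=
          congrArg Subtype.val (decodeE_code d hd h2.1)
        rw [hcongr _ (decodeE d hd (b+c)) (hR.trans hval.symm)]
        exact h2.2
  intro u hu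
  obtain ⟨w, hw⟩ := aux u hu
  refine ⟨w.copy (emb_zero d) rfl, ?_⟩
  intro e he
  rw [SimpleGraph.Walk.edges_copy] at he
  exact hw e he

lemma PC_finite (hfc : (cluster (zdGraph d) ω (0 : Fin d → ℤ)).Finite) :
    (PC d hd ω).Finite := by
  refine Set.Finite.subset (Set.Finite.preimage ((emb_inj d hd).injOn) hfc) ?_
  intro u hu
  exact PC_sub d hd ω u hu

end ClusterSide

section Events

open Percolation

variable (d : ℕ) (hd : 2 ≤ d)

def posf (n k : ℕ) (g : Fin (2*n) → Fin 12) : ℕ → ℤ×ℤ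
  | 0 => (2*(k:ℤ)+1, 0)
  | (i+1) => posf n k g i + stepv (if h : i < 2*n then g ⟨i, h⟩ else 0)

def visitF (n k : ℕ) (g : Fin (2*n) → Fin 12) : Finset (ℤ×ℤ) :=
  (Finset.range (2*n-1)).image (posf n k g)

def eventA (n k : ℕ) (g : Fin (2*n) → Fin 12) : Set (Config (zdGraph d)) :=
  {ω | ((visitF n k g).card = n ∧ ∀ s ∈ visitF n k g, validCode s) ∧
       ∀ s ∈ visitF n k g, ω (decodeE d hd s) = false}

lemma eventA_measure {p : ℝ} {μ : Measure (Config (zdGraph d))}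
    (hB : IsBernoulli (zdGraph d) p μ) (n k : ℕ) (g : Fin (2*n) → Fin 12) :
    μ (eventA d hd n k g) ≤ ENNReal.ofReal (1-p) ^ n := by
  classical
  by_cases hcond : (visitF n k g).card = n ∧ ∀ s ∈ visitF n k g, validCode s
  · set E : Finset ((zdGraph d).edgeSet) := (visitF n k g).image (decodeE d hd) with hE
    have hsub : eventA d hd n k g ⊆ {ω | ∀ e ∈ E, ω e = (fun _ => false) e} := by
      intro ω hω e he
      obtain ⟨s, hs, rfl⟩ := Finset.mem_image.1 he
      exact hω.2 s hs
    have hcardE : E.card = n := by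
      rw [hE, Finset.card_image_of_injOn, hcond.1]
      intro s hs t ht hst
      exact decodeE_inj d hd (hcond.2 s hs) (hcond.2 t ht) hst
    calc μ (eventA d hd n k g) ≤ μ {ω | ∀ e ∈ E, ω e = (fun _ => false) e} :=
          measure_mono hsub
    _ = ∏ _e ∈ E, ENNReal.ofReal (1-p) := by
          rw [hB.2 E (fun _ => false)]
          simp
    _ = ENNReal.ofReal (1-p) ^ n := by rw [Finset.prod_const, hcardE]
  · have hempty : μ (eventA d hd n k g) = 0 := by
      apply measure_mono_null (fun ω hω => hcond hω.1) (measure_empty)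
    rw [hempty]
    exact zero_le

lemma cluster_fin_subset :
    {ω : Config (zdGraph d) | (cluster (zdGraph d) ω (0 : Fin d → ℤ)).Finite} ⊆
      ⋃ (idx : Σ n : ℕ, Fin n × (Fin (2*n) → Fin 12)),
        eventA d hd idx.1 idx.2.1 idx.2.2 := by
  intro ω hω
  obtain ⟨n, k, l, hn, hkn, hch, hhd, hlen, hcard, hmem⟩ :=
    main_combin (PC d hd ω) (PC_finite d hd ω hω) (PC_zero d hd ω) (PC_conn d hd ω)
  classical
  set g : Fin (2*n) → Fin 12 := fun i =>
    if h2 : (i:ℕ)+1 < l.length then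
      (if h3 : Jadj (l.get ⟨i, by omega⟩) (l.get ⟨(i:ℕ)+1, h2⟩) then h3.choose else 0)
    else 0 with hg
  have posf_eq : ∀ i (hi : i < l.length), posf n k g i = l.get ⟨i, hi⟩ := by
    intro i
    induction i with
    | zero =>
      intro hi
      cases l with
      | nil => simp at hi
      | cons x t =>
        simp only [List.head?_cons, Option.some.injEq] at hhd
        show (2*(k:ℤ)+1, 0) = x
        exact hhd.symm
    | succ i ih =>
      intro hi
      have hi' : i < l.length := by omega
      have hi2n : i < 2*n := by
        rw [hlen] at hi
        omega
      have hJ : Jadj (l.get ⟨i, hi'⟩) (l.get ⟨i+1, hi⟩) := by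
        have := List.isChain_iff_getElem.1 hch i (by omega)
        exact this
      show posf n k g i + stepv _ = _
      rw [ih hi', dif_pos hi2n]
      have hgval : g ⟨i, hi2n⟩ = hJ.choose := by
        rw [hg]
        simp only
        rw [dif_pos hi, dif_pos hJ]
      rw [hgval]
      have := hJ.choose_spec
      rw [← this]
      ring
  have hvis : visitF n k g = l.toFinset := by
    ext z
    simp only [visitF, Finset.mem_image, Finset.mem_range, List.mem_toFinset]
    constructor
    · rintro ⟨i, hi, rfl⟩
      have hi' : i < l.length := by omega
      rw [posf_eq i hi']
      exact l.get_mem _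
    · intro hz
      obtain ⟨idx, hidx⟩ := List.mem_iff_get.1 hz
      refine ⟨idx, by rw [← hlen]; exact idx.isLt, ?_⟩
      rw [posf_eq idx idx.isLt]
      exact hidx
  refine Set.mem_iUnion.2 ⟨⟨n, ⟨k, hkn⟩, g⟩, ⟨⟨?_, ?_⟩, ?_⟩⟩
  · rw [hvis]; exact hcard
  · intro s hs
    rw [hvis] at hs
    obtain ⟨a, b, hab, _, _, he⟩ := hmem s (List.mem_toFinset.1 hs)
    rw [← he]
    exact code_valid hab
  · intro s hs
    rw [hvis] at hs
    obtain ⟨a, b, hab, haC, hbC, he⟩ := hmem s (List.mem_toFinset.1 hs)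
    rw [← he]
    exact PC_closed d hd ω haC hbC hab

end Events

end PcAux

open PcAux


/-- For bond percolation on `ℤ^d` with `d ≥ 2`, `p_c(ℤ^d) < 1`: there exists
`p < 1` with `θ(p) > 0`. -/
theorem pc_lt_one (d : ℕ) (hd : 2 ≤ d)
    (P : ℝ → Measure (Config (zdGraph d)))
    (hP : ∀ p ∈ Set.Icc (0:ℝ) 1, IsBernoulli (zdGraph d) p (P p)) :
    pc (zdGraph d) P 0 < 1 ∧ ∃ p : ℝ, 0 ≤ p ∧ p < 1 ∧ 0 < theta (zdGraph d) P 0 p := by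

  have hp0 : (0:ℝ) ≤ 1 - 1/2304 := by norm_num
  have key : ∀ p : ℝ, 1 - 1/2304 ≤ p → p ≤ 1 → 0 < theta (zdGraph d) P 0 p := by
    intro p hp1 hp2
    have hpIcc : p ∈ Set.Icc (0:ℝ) 1 := ⟨by linarith, hp2⟩
    obtain ⟨hprob, hcyl⟩ := hP p hpIcc
    have hq : (288 : ℝ≥0∞) * ENNReal.ofReal (1-p) ≤ 8⁻¹ := by
      have h1 : ENNReal.ofReal (1-p) ≤ ENNReal.ofReal (1/2304) :=
        ENNReal.ofReal_le_ofReal (by linarith)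
      have h3 : (288 : ℝ≥0∞) * ENNReal.ofReal (1/2304) = 8⁻¹ := by
        rw [show (1/2304 : ℝ) = (2304:ℝ)⁻¹ by norm_num,
          ENNReal.ofReal_inv_of_pos (by norm_num)]
        rw [show ENNReal.ofReal (2304:ℝ) = (2304:ℝ≥0∞) by simp [ENNReal.ofReal_ofNat]]
        rw [show (2304 : ℝ≥0∞) = 288 * 8 by norm_num]
        rw [ENNReal.mul_inv (by norm_num) (by norm_num)]
        rw [← mul_assoc, ENNReal.mul_inv_cancel (by norm_num) (by norm_num), one_mul]
      calc (288 : ℝ≥0∞) * ENNReal.ofReal (1-p) ≤ 288 * ENNReal.ofReal (1/2304) :=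
            mul_le_mul_right h1 288
      _ = 8⁻¹ := h3
    have hbound : P p {ω | (cluster (zdGraph d) ω (0 : Fin d → ℤ)).Finite} ≤ 2⁻¹ := by
      have hpern : ∀ n : ℕ,
          (∑' x : Fin n × (Fin (2*n) → Fin 12), P p (eventA d hd n x.1 x.2))
            ≤ 4⁻¹ * 2⁻¹^n := by
        intro n
        rw [tsum_fintype]
        rcases Nat.eq_zero_or_pos n with rfl | hn
        · have : (Finset.univ : Finset (Fin 0 × (Fin (2*0) → Fin 12))) = ∅ :=
            Finset.univ_eq_empty
          rw [this, Finset.sum_empty]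
          exact zero_le
        · have hstep1 : ∑ x : Fin n × (Fin (2*n) → Fin 12), P p (eventA d hd n x.1 x.2)
              ≤ (Finset.univ : Finset (Fin n × (Fin (2*n) → Fin 12))).card
                  • ENNReal.ofReal (1-p)^n :=
            Finset.sum_le_card_nsmul _ _ _
              (fun x _ => eventA_measure d hd ⟨hprob, hcyl⟩ n x.1 x.2)
          have hcards : (Finset.univ : Finset (Fin n × (Fin (2*n) → Fin 12))).card
              = n * 12^(2*n) := by
            rw [Finset.card_univ]
            simp
          rw [hcards, nsmul_eq_mul] at hstep1
          have h1 : ((n * 12^(2*n) : ℕ) : ℝ≥0∞) ≤ 288^n := by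
            have hn2 : (n : ℝ≥0∞) ≤ 2^n := by
              have := Nat.le_of_lt (Nat.lt_two_pow_self (n := n))
              exact_mod_cast this
            push_cast
            calc (n : ℝ≥0∞) * 12^(2*n) ≤ 2^n * 12^(2*n) := mul_le_mul_left hn2 _
            _ = 288^n := by rw [pow_mul, ← mul_pow]; norm_num
          have h2 : ((n * 12^(2*n) : ℕ) : ℝ≥0∞) * ENNReal.ofReal (1-p)^n ≤ 8⁻¹^n := by
            calc ((n * 12^(2*n) : ℕ) : ℝ≥0∞) * ENNReal.ofReal (1-p)^n
                ≤ 288^n * ENNReal.ofReal (1-p)^n := mul_le_mul_left h1 _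
            _ = (288 * ENNReal.ofReal (1-p))^n := by rw [mul_pow]
            _ ≤ (8⁻¹)^n := pow_le_pow_left' hq n
          have h4 : ((8:ℝ≥0∞)⁻¹)^n ≤ 4⁻¹ * 2⁻¹^n := by
            have h8 : (8:ℝ≥0∞)⁻¹ = 4⁻¹ * 2⁻¹ := by
              rw [← ENNReal.mul_inv (by norm_num) (by norm_num)]; norm_num
            rw [h8, mul_pow]
            have h44 : ((4:ℝ≥0∞)⁻¹)^n ≤ 4⁻¹ := by
              calc ((4:ℝ≥0∞)⁻¹)^n ≤ (4⁻¹)^1 := pow_le_pow_right_of_le_one' (by simp) hn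
              _ = 4⁻¹ := pow_one _
            exact mul_le_mul_left h44 _
          push_cast at hstep1
          calc ∑ x : Fin n × (Fin (2*n) → Fin 12), P p (eventA d hd n x.1 x.2)
              ≤ ((n : ℝ≥0∞) * 12^(2*n)) * ENNReal.ofReal (1-p)^n := hstep1
          _ ≤ 8⁻¹^n := by
                have := h2
                push_cast at this
                exact this
          _ ≤ 4⁻¹ * 2⁻¹^n := h4
      calc P p {ω | (cluster (zdGraph d) ω (0 : Fin d → ℤ)).Finite}
          ≤ P p (⋃ (idx : Σ n : ℕ, Fin n × (Fin (2*n) → Fin 12)),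
              eventA d hd idx.1 idx.2.1 idx.2.2) :=
            MeasureTheory.measure_mono (cluster_fin_subset d hd)
      _ ≤ ∑' (idx : Σ n : ℕ, Fin n × (Fin (2*n) → Fin 12)),
              P p (eventA d hd idx.1 idx.2.1 idx.2.2) :=
            MeasureTheory.measure_iUnion_le _
      _ = ∑' n : ℕ, ∑' x : Fin n × (Fin (2*n) → Fin 12), P p (eventA d hd n x.1 x.2) :=
            ENNReal.tsum_sigma' _
      _ ≤ ∑' n : ℕ, 4⁻¹ * 2⁻¹^n := ENNReal.tsum_le_tsum hpern
      _ = 4⁻¹ * ∑' n : ℕ, (2⁻¹ : ℝ≥0∞)^n := ENNReal.tsum_mul_left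
      _ = 4⁻¹ * 2 := by rw [ENNReal.tsum_geometric, ENNReal.one_sub_inv_two, inv_inv]
      _ = 2⁻¹ := by
            rw [show (4:ℝ≥0∞) = 2 * 2 from by norm_num,
              ENNReal.mul_inv (by norm_num) (by norm_num), mul_assoc,
              ENNReal.inv_mul_cancel (by norm_num) (by norm_num), mul_one]
    show 0 < P p {ω | (cluster (zdGraph d) ω (0 : Fin d → ℤ)).Infinite}
    by_contra h
    push_neg at h
    have h0 : P p {ω | (cluster (zdGraph d) ω (0 : Fin d → ℤ)).Infinite} = 0 :=
      le_antisymm h zero_le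
    haveI := hprob
    have huniv : P p Set.univ = 1 := MeasureTheory.measure_univ
    have hsplit : (1:ℝ≥0∞) ≤ P p {ω | (cluster (zdGraph d) ω (0 : Fin d → ℤ)).Infinite}
        + P p {ω | (cluster (zdGraph d) ω (0 : Fin d → ℤ)).Finite} := by
      rw [← huniv]
      calc P p Set.univ ≤ P p ({ω | (cluster (zdGraph d) ω (0 : Fin d → ℤ)).Infinite}
          ∪ {ω | (cluster (zdGraph d) ω (0 : Fin d → ℤ)).Finite}) := by
            apply MeasureTheory.measure_mono
            intro ω _
            by_cases hI : (cluster (zdGraph d) ω (0 : Fin d → ℤ)).Infinite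
            · exact Or.inl hI
            · exact Or.inr (Set.not_infinite.1 hI)
      _ ≤ _ := MeasureTheory.measure_union_le _ _
    rw [h0, zero_add] at hsplit
    have hcontr : (1:ℝ≥0∞) ≤ 2⁻¹ := le_trans hsplit hbound
    exact absurd hcontr (not_le.2 (ENNReal.inv_lt_one.2 (by norm_num)))
  constructor
  · have hle : pc (zdGraph d) P 0 ≤ 1 - 1/2304 := by
      apply Real.sSup_le _ hp0
      rintro x ⟨⟨hx0, hx1⟩, hθ⟩
      by_contra hgt
      push_neg at hgt
      have := key x (le_of_lt hgt) hx1
      rw [hθ] at this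
      exact lt_irrefl 0 this
    linarith
  · exact ⟨1 - 1/2304, hp0, by norm_num, key _ le_rfl (by norm_num)⟩
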